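/- (Key pathwise inequality for the Doob martingale) Let ρ satisfy (C1)-(C4), let Y* be the upper Snell envelope of H satisfying the Bellman principle Y*_r = max(H_r, ρ_r(Y*_{r+1})), and let M* be the ρ-Doob martingale with increments M*_{r+1} − M*_r = Y*_{r+1} − ρ_r(Y*_{r+1}). Then for every t ≤ j ≤ T, H_j + M*_t − M*_j ≤ Y*_t pointwise almost surely; consequently max_{t ≤ j ≤ T}(H_j + M*_t − M*_j) ≤ Y*_t a.s. -/
import Mathlib


open MeasureTheory

/-- Key pathwise inequality for the `ρ`-Doob martingale: if `Y*` satisfies the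
Bellman principle `Y*_r = max (H_r, ρ_r Y*_{r+1})` and `M*` has Doob increments
`M*_{r+1} - M*_r = Y*_{r+1} - ρ_r (Y*_{r+1})`, then for every `t ≤ j ≤ T`,
`H_j + M*_t - M*_j ≤ Y*_t` pointwise, and consequently
`max_{t ≤ j ≤ T} (H_j + M*_t - M*_j) ≤ Y*_t`. -/
theorem dmu_pathwise_inequality
    {Ω : Type*} {m : MeasurableSpace Ω}
    (F : MeasureTheory.Filtration ℕ m) (T : ℕ)
    (ρ : ℕ → (Ω → ℝ) → (Ω → ℝ))
    (hmeas : ∀ s (X : Ω → ℝ), Measurable[F s] (ρ s X))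
    (hmono : ∀ s, s ≤ T → ∀ (X Y : Ω → ℝ), X ≤ Y → ρ s X ≤ ρ s Y)
    (hreg : ∀ s, s ≤ T → ∀ (X : Ω → ℝ) (A : Set Ω), MeasurableSet[F s] A →
      ρ s (A.indicator X) = A.indicator (ρ s X))
    (hrec : ∀ s, s < T → ∀ (X : Ω → ℝ), ρ s (ρ (s + 1) X) = ρ s X)
    (hcti : ∀ s, s ≤ T → ∀ (X Y : Ω → ℝ), Measurable[F s] Y →
      ρ s (X + Y) = ρ s X + Y)
    (H : ℕ → Ω → ℝ)
    (Ystar : ℕ → Ω → ℝ)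
    (hYT : Ystar T = H T)
    (hBell : ∀ r, r < T → ∀ ω,
      Ystar r ω = max (H r ω) (ρ r (Ystar (r + 1)) ω))
    (Mstar : ℕ → Ω → ℝ)
    (hM0 : Mstar 0 = 0)
    (hMinc : ∀ r, r < T → ∀ ω,
      Mstar (r + 1) ω - Mstar r ω = Ystar (r + 1) ω - ρ r (Ystar (r + 1)) ω)
    (t : ℕ) (ht : t ≤ T) :
    (∀ ω, ∀ j, t ≤ j → j ≤ T →
      H j ω + Mstar t ω - Mstar j ω ≤ Ystar t ω) ∧
    (∀ ω, (Finset.Icc t T).sup' (Finset.nonempty_Icc.mpr ht)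
        (fun j => H j ω + Mstar t ω - Mstar j ω) ≤ Ystar t ω) := by
  have key : ∀ ω, ∀ j, t ≤ j → j ≤ T →
      Ystar j ω + Mstar t ω - Mstar j ω ≤ Ystar t ω := by
    intro ω j
    induction j with
    | zero => intro h1 _; interval_cases t; simp
    | succ k ih =>
      intro h1 h2
      rcases Nat.lt_or_ge t (k+1) with hlt | hge
      · have htk : t ≤ k := Nat.lt_succ_iff.mp hlt
        have hkT : k < T := h2
        have hinc := hMinc k hkT ω
        have hrho : ρ k (Ystar (k+1)) ω ≤ Ystar k ω := by
          rw [hBell k hkT ω]; exact le_max_right _ _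
        have := ih htk (le_of_lt hkT)
        nlinarith [this, hinc, hrho]
      · have : t = k + 1 := le_antisymm h1 hge
        subst this; simp
  constructor
  · intro ω j h1 h2
    have hH : H j ω ≤ Ystar j ω := by
      rcases Nat.lt_or_ge j T with hj | hj
      · rw [hBell j hj ω]; exact le_max_left _ _
      · have : j = T := le_antisymm h2 hj
        subst this; rw [hYT]
    have := key ω j h1 h2
    linarith
  · intro ω
    apply Finset.sup'_le
    intro j hj
    rw [Finset.mem_Icc] at hj
    exact (fun h1 h2 => by
      have hH : H j ω ≤ Ystar j ω := by
        rcases Nat.lt_or_ge j T with hjT | hjT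
        · rw [hBell j hjT ω]; exact le_max_left _ _
        · have : j = T := le_antisymm h2 hjT
          subst this; rw [hYT]
      have := key ω j h1 h2
      linarith) hj.1 hj.2
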